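/- Proposition 3 (δISS of deep GRUs): consider the deep GRU with M layers, fix λ̌^i ≥ 1 for each layer i ∈ {1,…,M} and set λ̌^0 = 1. Define, for each layer i, σ̌_z^i = σ(‖[λ̌^{i−1}W_z^i λ̌^iU_z^i b_z^i]‖_∞), σ̌_f^i = σ(‖[λ̌^{i−1}W_f^i λ̌^iU_f^i b_f^i]‖_∞), φ̌_r^i = tanh(‖[λ̌^{i−1}W_r^i λ̌^iU_r^i b_r^i]‖_∞), and suppose that for every layer i, ‖U_r^i‖_∞ ( (1/4) λ̌^i ‖U_f^i‖_∞ + σ̌_f^i ) < 1 − (1/4) ((λ̌^i + φ̌_r^i)/(1 − σ̌_z^i)) ‖U_z^i‖_∞. Then the deep GRU is Incrementally Input-to-State Stable: there exist a class-KL function β_Δ and a class-K∞ function γ_Δu such that for every pair of initial states x̄_a, x̄_b with ‖x̄_a^i‖_∞ ≤ λ̌^i and ‖x̄_b^i‖_∞ ≤ λ̌^i for all i, every pair of input sequences u_a, u_b with ‖u_a(t)‖_∞ ≤ 1 and ‖u_b(t)‖_∞ ≤ 1 for all t, and every k ≥ 0, the concatenated state trajectories satisfy ‖x_a(k) − x_b(k)‖_∞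 ≤ β_Δ(‖x̄_a − x̄_b‖_∞, k) + γ_Δu(sup_t ‖u_a(t) − u_b(t)‖_∞). -/

import Mathlib

open Real Filter

/-- The sigmoid activation function. -/
noncomputable def sigmoid (s : ℝ) : ℝ := 1 / (1 + Real.exp (-s))

/-- Induced infinity norm of a matrix (maximum absolute row sum). -/
noncomputable def matNorm {n m : ℕ} (A : Matrix (Fin n) (Fin m) ℝ) : ℝ :=
  ⨆ i, ∑ j, |A i j|

/-- Infinity norm of the horizontal concatenation `[A B c]`
(maximum absolute row sum of the concatenated matrix). -/
noncomputable def catNorm {n m p : ℕ} (A : Matrix (Fin n) (Fin m) ℝ)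
    (B : Matrix (Fin n) (Fin p) ℝ) (c : Fin n → ℝ) : ℝ :=
  ⨆ i, (∑ j, |A i j| + ∑ j, |B i j| + |c i|)

/-- One step of the single-layer GRU:
`x⁺ = z ∘ x + (1 - z) ∘ tanh(W_r u + U_r (f ∘ x) + b_r)`,
`z = σ(W_z u + U_z x + b_z)`, `f = σ(W_f u + U_f x + b_f)`. -/
noncomputable def gruStep {nu nx : ℕ}
    (Wz Wf Wr : Matrix (Fin nx) (Fin nu) ℝ)
    (Uz Uf Ur : Matrix (Fin nx) (Fin nx) ℝ)
    (bz bf br : Fin nx → ℝ)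
    (u : Fin nu → ℝ) (x : Fin nx → ℝ) : Fin nx → ℝ :=
  let z : Fin nx → ℝ := fun i => _root_.sigmoid ((Wz.mulVec u + Uz.mulVec x + bz) i)
  let f : Fin nx → ℝ := fun i => _root_.sigmoid ((Wf.mulVec u + Uf.mulVec x + bf) i)
  let r : Fin nx → ℝ := fun i => Real.tanh ((Wr.mulVec u + Ur.mulVec (f * x) + br) i)
  fun j => z j * x j + (1 - z j) * r j

/-- A function `γ : [0,∞) → [0,∞)` is of class K∞ if it is continuous,
strictly increasing, unbounded and `γ 0 = 0`. -/
def IsKInf (γ : ℝ → ℝ) : Prop :=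
  ContinuousOn γ (Set.Ici 0) ∧ StrictMonoOn γ (Set.Ici 0) ∧ γ 0 = 0 ∧
    ∀ M : ℝ, ∃ s, 0 ≤ s ∧ M < γ s

/-- A function `β : [0,∞) × ℕ → [0,∞)` is of class KL if `β (·, k)` is of class K∞
for each `k`, `β (s, ·)` is nonincreasing, and `β (s, k) → 0` as `k → ∞`. -/
def IsKL (β : ℝ → ℕ → ℝ) : Prop :=
  (∀ k : ℕ, IsKInf fun s => β s k) ∧
    (∀ s : ℝ, 0 ≤ s → ∀ k l : ℕ, k ≤ l → β s l ≤ β s k) ∧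
    (∀ s : ℝ, 0 ≤ s → Filter.Tendsto (fun k : ℕ => β s k) Filter.atTop (nhds 0))

/-- Input dimension of layer `i` of a deep GRU: the first layer is fed by the
external input (dimension `nu`), layer `i+1` is fed by the state of layer `i`. -/
def inDim (nu : ℕ) (n : ℕ → ℕ) : ℕ → ℕ
  | 0 => nu
  | i + 1 => n i

/-- Bound on the input of layer `i`: the external input is unity bounded (`λ̌⁰ = 1`),
and layer `i+1` is fed by the state of layer `i`, bounded by `λ̌^i`. -/
noncomputable def lamIn (lam : ℕ → ℝ) : ℕ → ℝ
  | 0 => 1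
  | i + 1 => lam i


lemma one_add_exp_pos (s : ℝ) : 0 < 1 + Real.exp (-s) := by positivity

lemma sigmoid_pos (s : ℝ) : 0 < _root_.sigmoid s := by
  unfold _root_.sigmoid; positivity

lemma sigmoid_lt_one (s : ℝ) : _root_.sigmoid s < 1 := by
  unfold _root_.sigmoid
  rw [div_lt_one (one_add_exp_pos s)]
  linarith [Real.exp_pos (-s)]

lemma sigmoid_mono : Monotone _root_.sigmoid := by
  intro a b hab
  unfold _root_.sigmoid
  apply div_le_div_of_nonneg_left (by norm_num) (one_add_exp_pos b)
  have := Real.exp_le_exp.2 (neg_le_neg hab)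
  linarith

lemma sigmoid_neg (s : ℝ) : _root_.sigmoid (-s) = 1 - _root_.sigmoid s := by
  unfold _root_.sigmoid
  rw [neg_neg]
  have h1 := (one_add_exp_pos s).ne'
  have h2 : (0:ℝ) < 1 + Real.exp s := by positivity
  have he : Real.exp s * Real.exp (-s) = 1 := by
    rw [← Real.exp_add]; simp
  field_simp
  nlinarith [he]

lemma hasDerivAt_sigmoid (x : ℝ) :
    HasDerivAt _root_.sigmoid (Real.exp (-x) / (1 + Real.exp (-x))^2) x := by
  have h1 : HasDerivAt (fun s : ℝ => 1 + Real.exp (-s)) (-Real.exp (-x)) x := by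
    have := (Real.hasDerivAt_exp (-x)).comp x (hasDerivAt_neg x)
    simpa using (this.const_add 1)
  have h2 := h1.inv (one_add_exp_pos x).ne'
  have : HasDerivAt (fun s : ℝ => (1 + Real.exp (-s))⁻¹)
      (Real.exp (-x) / (1 + Real.exp (-x))^2) x := by
    rw [neg_neg] at h2
    exact h2
  have hsig : _root_.sigmoid = fun s : ℝ => (1 + Real.exp (-s))⁻¹ := by
    funext s; simp [_root_.sigmoid, one_div]
  rw [hsig]; exact this

lemma sigmoid_lip (a b : ℝ) : |_root_.sigmoid a - _root_.sigmoid b| ≤ (1/4) * |a - b| := by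
  have hd : ∀ x : ℝ, x ∈ (Set.univ : Set ℝ) → DifferentiableAt ℝ _root_.sigmoid x :=
    fun x _ => (_root_.hasDerivAt_sigmoid x).differentiableAt
  have hb : ∀ x : ℝ, x ∈ (Set.univ : Set ℝ) → ‖deriv _root_.sigmoid x‖ ≤ (1/4 : ℝ) := by
    intro x _
    rw [(_root_.hasDerivAt_sigmoid x).deriv, Real.norm_eq_abs]
    have he := Real.exp_pos (-x)
    rw [abs_of_nonneg (by positivity)]
    rw [div_le_iff₀ (by positivity)]
    nlinarith [sq_nonneg (1 - Real.exp (-x))]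
  have := convex_univ.norm_image_sub_le_of_norm_deriv_le hd hb (Set.mem_univ b) (Set.mem_univ a)
  simpa [Real.norm_eq_abs] using this

lemma tanh_eq_sigmoid (x : ℝ) : Real.tanh x = 2 * _root_.sigmoid (2 * x) - 1 := by
  rw [Real.tanh_eq_sinh_div_cosh, Real.sinh_eq, Real.cosh_eq]
  unfold _root_.sigmoid
  have h1 : Real.exp x > 0 := Real.exp_pos x
  have h2 : Real.exp (-x) > 0 := Real.exp_pos (-x)
  have h3 : Real.exp (-(2*x)) = Real.exp (-x) * Real.exp (-x) := by
    rw [← Real.exp_add]; ring_nf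
  have h4 : Real.exp x * Real.exp (-x) = 1 := by rw [← Real.exp_add]; simp
  rw [h3]
  field_simp
  nlinarith [h4]

lemma tanh_lip (a b : ℝ) : |Real.tanh a - Real.tanh b| ≤ |a - b| := by
  rw [tanh_eq_sigmoid, tanh_eq_sigmoid]
  have := sigmoid_lip (2*a) (2*b)
  have h2 : |2*a - 2*b| = 2 * |a - b| := by
    rw [show (2*a - 2*b) = 2*(a-b) by ring, abs_mul, abs_two]
  calc |2 * _root_.sigmoid (2*a) - 1 - (2 * _root_.sigmoid (2*b) - 1)| = 2 * |_root_.sigmoid (2*a) - _root_.sigmoid (2*b)| := by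
        rw [show 2 * _root_.sigmoid (2*a) - 1 - (2 * _root_.sigmoid (2*b) - 1) = 2*(_root_.sigmoid (2*a) - _root_.sigmoid (2*b)) by ring, abs_mul, abs_two]
    _ ≤ |a - b| := by rw [h2] at this; linarith

lemma tanh_mono : Monotone Real.tanh := by
  intro a b hab
  rw [tanh_eq_sigmoid, tanh_eq_sigmoid]
  have := sigmoid_mono (by linarith : 2*a ≤ 2*b)
  linarith

lemma abs_tanh_lt_one (s : ℝ) : |Real.tanh s| < 1 := by
  rw [tanh_eq_sigmoid, abs_lt]
  constructor <;> [linarith [_root_.sigmoid_pos (2*s)]; linarith [_root_.sigmoid_lt_one (2*s)]]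

lemma abs_tanh_le (s c : ℝ) (h : |s| ≤ c) : |Real.tanh s| ≤ Real.tanh c := by
  rcases abs_le.1 h with ⟨h1, h2⟩
  rw [abs_le]
  constructor
  · have := tanh_mono h1
    rw [Real.tanh_neg] at this; linarith
  · exact tanh_mono h2

lemma abs_sigmoid_le (s c : ℝ) (h : |s| ≤ c) :
    1 - _root_.sigmoid c ≤ _root_.sigmoid s ∧ _root_.sigmoid s ≤ _root_.sigmoid c := by
  rcases abs_le.1 h with ⟨h1, h2⟩
  exact ⟨by rw [← _root_.sigmoid_neg]; exact sigmoid_mono h1, sigmoid_mono h2⟩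

lemma tanh_nonneg {c : ℝ} (h : 0 ≤ c) : 0 ≤ Real.tanh c := by
  have := tanh_mono h; simpa [Real.tanh_zero] using this
lemma row_le_matNorm {n m : ℕ} (A : Matrix (Fin n) (Fin m) ℝ) (i : Fin n) :
    ∑ j, |A i j| ≤ matNorm A :=
  by unfold matNorm; exact le_ciSup (Set.Finite.bddAbove (Set.finite_range (fun i => ∑ j, |A i j|))) i

lemma matNorm_nonneg {n m : ℕ} (A : Matrix (Fin n) (Fin m) ℝ) : 0 ≤ matNorm A := by
  rcases isEmpty_or_nonempty (Fin n) with h | h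
  · simp [matNorm, Real.iSup_of_isEmpty]
  · obtain ⟨i⟩ := h
    exact le_trans (Finset.sum_nonneg fun j _ => abs_nonneg _) (row_le_matNorm A i)

lemma row_le_catNorm {n m p : ℕ} (A : Matrix (Fin n) (Fin m) ℝ)
    (B : Matrix (Fin n) (Fin p) ℝ) (c : Fin n → ℝ) (i : Fin n) :
    ∑ j, |A i j| + ∑ j, |B i j| + |c i| ≤ catNorm A B c :=
  by unfold catNorm; exact le_ciSup (Set.Finite.bddAbove (Set.finite_range (fun i => ∑ j, |A i j| + ∑ j, |B i j| + |c i|))) i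

lemma abs_mulVec_le {n m : ℕ} (A : Matrix (Fin n) (Fin m) ℝ) (x : Fin m → ℝ) (j : Fin n) :
    |A.mulVec x j| ≤ matNorm A * ‖x‖ := by
  have h1 : |A.mulVec x j| ≤ ∑ i, |A j i| * ‖x‖ := by
    simp only [Matrix.mulVec, dotProduct]
    refine le_trans (Finset.abs_sum_le_sum_abs _ _) (Finset.sum_le_sum fun i _ => ?_)
    rw [abs_mul]
    exact mul_le_mul_of_nonneg_left (by simpa using norm_le_pi_norm x i) (abs_nonneg _)
  calc |A.mulVec x j| ≤ (∑ i, |A j i|) * ‖x‖ := by rw [Finset.sum_mul]; exact h1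
    _ ≤ matNorm A * ‖x‖ := mul_le_mul_of_nonneg_right (row_le_matNorm A j) (norm_nonneg _)

/-- bound on the affine argument by the cat norm of scaled matrices -/
lemma abs_arg_le_catNorm {n m p : ℕ} (W : Matrix (Fin n) (Fin m) ℝ)
    (U : Matrix (Fin n) (Fin p) ℝ) (b : Fin n → ℝ) (u : Fin m → ℝ) (x : Fin p → ℝ)
    (μ lam : ℝ) (hμ : 0 ≤ μ) (hlam : 0 ≤ lam) (hu : ‖u‖ ≤ μ) (hx : ‖x‖ ≤ lam) (j : Fin n) :
    |(W.mulVec u + U.mulVec x + b) j| ≤ catNorm (μ • W) (lam • U) b := by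
  have hWu : |W.mulVec u j| ≤ ∑ i, |(μ • W) j i| := by
    simp only [Matrix.mulVec, dotProduct, Matrix.smul_apply, smul_eq_mul, abs_mul,
      abs_of_nonneg hμ]
    refine le_trans (Finset.abs_sum_le_sum_abs _ _) (Finset.sum_le_sum fun i _ => ?_)
    rw [abs_mul, mul_comm μ _]
    refine mul_le_mul_of_nonneg_left ?_ (abs_nonneg _)
    exact le_trans (by simpa using norm_le_pi_norm u i) hu
  have hUx : |U.mulVec x j| ≤ ∑ i, |(lam • U) j i| := by
    simp only [Matrix.mulVec, dotProduct, Matrix.smul_apply, smul_eq_mul, abs_mul,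
      abs_of_nonneg hlam]
    refine le_trans (Finset.abs_sum_le_sum_abs _ _) (Finset.sum_le_sum fun i _ => ?_)
    rw [abs_mul, mul_comm lam _]
    refine mul_le_mul_of_nonneg_left ?_ (abs_nonneg _)
    exact le_trans (by simpa using norm_le_pi_norm x i) hx
  calc |(W.mulVec u + U.mulVec x + b) j| ≤ |W.mulVec u j| + |U.mulVec x j| + |b j| := by
        simp only [Pi.add_apply]
        exact le_trans (abs_add_le _ _) (by linarith [abs_add_le (W.mulVec u j) (U.mulVec x j)])
    _ ≤ ∑ i, |(μ • W) j i| + ∑ i, |(lam • U) j i| + |b j| := by linarith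
    _ ≤ _ := row_le_catNorm _ _ _ j

lemma pi_norm_le {n : ℕ} (v : Fin n → ℝ) (C : ℝ) (hC : 0 ≤ C) (h : ∀ j, |v j| ≤ C) :
    ‖v‖ ≤ C := by
  rw [pi_norm_le_iff_of_nonneg hC]
  simpa [Real.norm_eq_abs] using h

/-- contraction coefficient of one GRU layer -/
noncomputable def aCoef {nu nx : ℕ} (Wz Wf Wr : Matrix (Fin nx) (Fin nu) ℝ)
    (Uz Uf Ur : Matrix (Fin nx) (Fin nx) ℝ) (bz bf br : Fin nx → ℝ) (μ lam : ℝ) : ℝ :=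
  _root_.sigmoid (catNorm (μ•Wz) (lam•Uz) bz)
    + (1 - _root_.sigmoid (catNorm (μ•Wz) (lam•Uz) bz)) *
        (matNorm Ur * ((1/4)*lam*matNorm Uf + _root_.sigmoid (catNorm (μ•Wf) (lam•Uf) bf)))
    + (1/4)*(lam + Real.tanh (catNorm (μ•Wr) (lam•Ur) br)) * matNorm Uz

/-- input gain coefficient of one GRU layer -/
noncomputable def bCoef {nu nx : ℕ} (Wz Wf Wr : Matrix (Fin nx) (Fin nu) ℝ)
    (Uz Uf Ur : Matrix (Fin nx) (Fin nx) ℝ) (bz bf br : Fin nx → ℝ) (μ lam : ℝ) : ℝ :=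
  matNorm Wr + (1/4)*lam*matNorm Ur*matNorm Wf
    + (1/4)*(lam + Real.tanh (catNorm (μ•Wr) (lam•Ur) br)) * matNorm Wz

lemma catNorm_nonneg {n m p : ℕ} (A : Matrix (Fin n) (Fin m) ℝ)
    (B : Matrix (Fin n) (Fin p) ℝ) (c : Fin n → ℝ) : 0 ≤ catNorm A B c := by
  rcases isEmpty_or_nonempty (Fin n) with h | h
  · simp [catNorm, Real.iSup_of_isEmpty]
  · obtain ⟨i⟩ := h
    refine le_trans ?_ (row_le_catNorm A B c i)
    positivity

lemma gruStep_apply {nu nx : ℕ}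
    (Wz Wf Wr : Matrix (Fin nx) (Fin nu) ℝ) (Uz Uf Ur : Matrix (Fin nx) (Fin nx) ℝ)
    (bz bf br : Fin nx → ℝ) (u : Fin nu → ℝ) (x : Fin nx → ℝ) (j : Fin nx) :
    gruStep Wz Wf Wr Uz Uf Ur bz bf br u x j =
      _root_.sigmoid ((Wz.mulVec u + Uz.mulVec x + bz) j) * x j +
      (1 - _root_.sigmoid ((Wz.mulVec u + Uz.mulVec x + bz) j)) *
        Real.tanh ((Wr.mulVec u +
          Ur.mulVec ((fun i => _root_.sigmoid ((Wf.mulVec u + Uf.mulVec x + bf) i)) * x) + br) j) := rfl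

/-- state boundedness invariance -/
lemma gru_invariant {nu nx : ℕ}
    (Wz Wf Wr : Matrix (Fin nx) (Fin nu) ℝ) (Uz Uf Ur : Matrix (Fin nx) (Fin nx) ℝ)
    (bz bf br : Fin nx → ℝ) (u : Fin nu → ℝ) (x : Fin nx → ℝ)
    (lam : ℝ) (hlam : 1 ≤ lam) (hx : ‖x‖ ≤ lam) :
    ‖gruStep Wz Wf Wr Uz Uf Ur bz bf br u x‖ ≤ lam := by
  apply pi_norm_le _ _ (by linarith)
  intro j
  rw [gruStep_apply]
  set z := _root_.sigmoid ((Wz.mulVec u + Uz.mulVec x + bz) j) with hz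
  set r := Real.tanh ((Wr.mulVec u +
      Ur.mulVec ((fun i => _root_.sigmoid ((Wf.mulVec u + Uf.mulVec x + bf) i)) * x) + br) j) with hr
  have hz1 : 0 < z := _root_.sigmoid_pos _
  have hz2 : z < 1 := _root_.sigmoid_lt_one _
  have hr1 : |r| ≤ 1 := (_root_.abs_tanh_lt_one _).le
  have hxj : |x j| ≤ lam := le_trans (by simpa using norm_le_pi_norm x j) hx
  have h1 : |z * x j + (1 - z) * r| ≤ z * |x j| + (1 - z) * |r| := by
    refine le_trans (abs_add_le _ _) ?_
    rw [abs_mul, abs_mul, abs_of_nonneg hz1.le, abs_of_nonneg (by linarith : (0:ℝ) ≤ 1 - z)]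
  nlinarith [abs_nonneg (x j), abs_nonneg r]


/-- pure arithmetic core of the incremental bound -/
lemma inc_core {σz φr NUz NWz E Fr za zb ra rb xaj xbj dx du lam : ℝ}
    (hE0 : 0 ≤ E) (hE1 : E ≤ 1) (hFr0 : 0 ≤ Fr)
    (hNWz : 0 ≤ NWz) (hNUz : 0 ≤ NUz) (hlam : 0 ≤ lam) (hφr0 : 0 ≤ φr)
    (hdx0 : 0 ≤ dx) (hdu0 : 0 ≤ du)
    (hza0 : 0 < za) (hza1 : za < 1) (hza_le : za ≤ σz)
    (hdz : |za - zb| ≤ (1/4)*(NWz*du + NUz*dx))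
    (hxbj : |xbj| ≤ lam) (hrb : |rb| ≤ φr)
    (hdr : |ra - rb| ≤ E*dx + Fr*du)
    (hdxj : |xaj - xbj| ≤ dx) :
    |za*xaj + (1-za)*ra - (zb*xbj + (1-zb)*rb)| ≤
      (σz + (1-σz)*E + (1/4)*(lam+φr)*NUz)*dx + (Fr + (1/4)*(lam+φr)*NWz)*du := by
  have hsplit : za*xaj + (1-za)*ra - (zb*xbj + (1-zb)*rb)
      = za*(xaj - xbj) + (za - zb)*xbj + (1-za)*(ra - rb) - (za - zb)*rb := by ring
  have t1 : |za*(xaj - xbj)| ≤ za * dx := by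
    rw [abs_mul, abs_of_nonneg hza0.le]
    exact mul_le_mul_of_nonneg_left hdxj hza0.le
  have t2 : |(za - zb)*xbj| ≤ |za - zb| * lam := by
    rw [abs_mul]; exact mul_le_mul_of_nonneg_left hxbj (abs_nonneg _)
  have t3 : |(1-za)*(ra - rb)| ≤ (1-za) * |ra - rb| := by
    rw [abs_mul, abs_of_nonneg (by linarith : (0:ℝ) ≤ 1 - za)]
  have t4 : |(za - zb)*rb| ≤ |za - zb| * φr := by
    rw [abs_mul]; exact mul_le_mul_of_nonneg_left hrb (abs_nonneg _)
  have tri : |za*xaj + (1-za)*ra - (zb*xbj + (1-zb)*rb)|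
      ≤ za * dx + |za - zb| * lam + (1-za) * |ra - rb| + |za - zb| * φr := by
    rw [hsplit]
    calc |za*(xaj - xbj) + (za - zb)*xbj + (1-za)*(ra - rb) - (za - zb)*rb|
        ≤ |za*(xaj - xbj) + (za - zb)*xbj + (1-za)*(ra - rb)| + |(za - zb)*rb| := by
          exact abs_sub _ _
      _ ≤ |za*(xaj - xbj) + (za - zb)*xbj| + |(1-za)*(ra - rb)| + |(za - zb)*rb| := by
          linarith [abs_add_le (za*(xaj - xbj) + (za - zb)*xbj) ((1-za)*(ra - rb))]
      _ ≤ |za*(xaj - xbj)| + |(za - zb)*xbj| + |(1-za)*(ra - rb)| + |(za - zb)*rb| := by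
          linarith [abs_add_le (za*(xaj - xbj)) ((za - zb)*xbj)]
      _ ≤ _ := by linarith
  refine le_trans tri ?_
  have c1 : (1-za) * |ra - rb| ≤ (1-za) * (E*dx + Fr*du) :=
    mul_le_mul_of_nonneg_left hdr (by linarith)
  have c1' : (1-za) * (E*dx + Fr*du) = (1-za)*(E*dx) + (1-za)*(Fr*du) := by ring
  have c3 : za*dx + (1-za)*(E*dx) ≤ (σz + (1-σz)*E)*dx := by
    have h := mul_nonneg (mul_nonneg (by linarith : (0:ℝ) ≤ σz - za)
      (by linarith : (0:ℝ) ≤ 1 - E)) hdx0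
    nlinarith [h]
  have c4 : (1-za)*(Fr*du) ≤ Fr*du :=
    mul_le_of_le_one_left (mul_nonneg hFr0 hdu0) (by linarith)
  have c2 : |za - zb| * (lam + φr) ≤ (1/4)*(NWz*du + NUz*dx) * (lam + φr) :=
    mul_le_mul_of_nonneg_right hdz (by linarith)
  nlinarith [c1, c2, c3, c4, c1', abs_nonneg (za - zb)]

set_option maxHeartbeats 1000000 in
/-- core incremental one-step bound for a single GRU layer -/
lemma gru_step_inc {nu nx : ℕ}
    (Wz Wf Wr : Matrix (Fin nx) (Fin nu) ℝ) (Uz Uf Ur : Matrix (Fin nx) (Fin nx) ℝ)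
    (bz bf br : Fin nx → ℝ) (μ lam : ℝ) (hμ : 0 ≤ μ) (hlam : 0 ≤ lam)
    (ua ub : Fin nu → ℝ) (xa xb : Fin nx → ℝ)
    (hua : ‖ua‖ ≤ μ) (hub : ‖ub‖ ≤ μ) (hxa : ‖xa‖ ≤ lam) (hxb : ‖xb‖ ≤ lam)
    (hE : matNorm Ur * ((1/4)*lam*matNorm Uf + _root_.sigmoid (catNorm (μ•Wf) (lam•Uf) bf)) ≤ 1) :
    ‖gruStep Wz Wf Wr Uz Uf Ur bz bf br ua xa - gruStep Wz Wf Wr Uz Uf Ur bz bf br ub xb‖ ≤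
      aCoef Wz Wf Wr Uz Uf Ur bz bf br μ lam * ‖xa - xb‖
      + bCoef Wz Wf Wr Uz Uf Ur bz bf br μ lam * ‖ua - ub‖ := by
  unfold aCoef bCoef
  have hNWz : (0:ℝ) ≤ matNorm Wz := matNorm_nonneg _
  have hNUz : (0:ℝ) ≤ matNorm Uz := matNorm_nonneg _
  have hNWf : (0:ℝ) ≤ matNorm Wf := matNorm_nonneg _
  have hNUf : (0:ℝ) ≤ matNorm Uf := matNorm_nonneg _
  have hNWr : (0:ℝ) ≤ matNorm Wr := matNorm_nonneg _
  have hNUr : (0:ℝ) ≤ matNorm Ur := matNorm_nonneg _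
  have hσz0 : 0 < _root_.sigmoid (catNorm (μ•Wz) (lam•Uz) bz) := _root_.sigmoid_pos _
  have hσz1 : _root_.sigmoid (catNorm (μ•Wz) (lam•Uz) bz) < 1 := _root_.sigmoid_lt_one _
  have hσf0 : 0 < _root_.sigmoid (catNorm (μ•Wf) (lam•Uf) bf) := _root_.sigmoid_pos _
  have hφr0 : 0 ≤ Real.tanh (catNorm (μ•Wr) (lam•Ur) br) :=
    tanh_nonneg (catNorm_nonneg _ _ _)
  have hdx0 : (0:ℝ) ≤ ‖xa - xb‖ := norm_nonneg _
  have hdu0 : (0:ℝ) ≤ ‖ua - ub‖ := norm_nonneg _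
  have hE0 : 0 ≤ matNorm Ur * ((1/4)*lam*matNorm Uf + _root_.sigmoid (catNorm (μ•Wf) (lam•Uf) bf)) :=
    mul_nonneg hNUr (by nlinarith)
  have ha0 : 0 ≤ _root_.sigmoid (catNorm (μ•Wz) (lam•Uz) bz)
        + (1 - _root_.sigmoid (catNorm (μ•Wz) (lam•Uz) bz)) *
            (matNorm Ur * ((1/4)*lam*matNorm Uf + _root_.sigmoid (catNorm (μ•Wf) (lam•Uf) bf)))
        + (1/4)*(lam + Real.tanh (catNorm (μ•Wr) (lam•Ur) br)) * matNorm Uz := by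
    have h1 : 0 ≤ (1 - _root_.sigmoid (catNorm (μ•Wz) (lam•Uz) bz)) *
        (matNorm Ur * ((1/4)*lam*matNorm Uf + _root_.sigmoid (catNorm (μ•Wf) (lam•Uf) bf))) :=
      mul_nonneg (by linarith) hE0
    have h2 : 0 ≤ (1/4)*(lam + Real.tanh (catNorm (μ•Wr) (lam•Ur) br)) * matNorm Uz :=
      mul_nonneg (by linarith) hNUz
    linarith
  have hb0 : 0 ≤ matNorm Wr + (1/4)*lam*matNorm Ur*matNorm Wf
        + (1/4)*(lam + Real.tanh (catNorm (μ•Wr) (lam•Ur) br)) * matNorm Wz := by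
    have h2 : 0 ≤ (1/4)*(lam + Real.tanh (catNorm (μ•Wr) (lam•Ur) br)) * matNorm Wz :=
      mul_nonneg (by linarith) hNWz
    have h3 : 0 ≤ (1/4)*lam*matNorm Ur*matNorm Wf := by positivity
    linarith
  apply pi_norm_le _ _ (add_nonneg (mul_nonneg ha0 hdx0) (mul_nonneg hb0 hdu0))
  intro j
  rw [Pi.sub_apply, gruStep_apply, gruStep_apply]
  -- abbreviations (definitional)
  set fa : Fin nx → ℝ := fun i => _root_.sigmoid ((Wf.mulVec ua + Uf.mulVec xa + bf) i) with hfa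
  set fb : Fin nx → ℝ := fun i => _root_.sigmoid ((Wf.mulVec ub + Uf.mulVec xb + bf) i) with hfb
  -- component bounds
  have hza_le : _root_.sigmoid ((Wz.mulVec ua + Uz.mulVec xa + bz) j)
      ≤ _root_.sigmoid (catNorm (μ•Wz) (lam•Uz) bz) :=
    (abs_sigmoid_le _ _ (abs_arg_le_catNorm Wz Uz bz ua xa μ lam hμ hlam hua hxa j)).2
  have hza0 : 0 < _root_.sigmoid ((Wz.mulVec ua + Uz.mulVec xa + bz) j) := _root_.sigmoid_pos _
  have hza1 : _root_.sigmoid ((Wz.mulVec ua + Uz.mulVec xa + bz) j) < 1 := _root_.sigmoid_lt_one _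
  have hxbj : |xb j| ≤ lam := le_trans (by simpa using norm_le_pi_norm xb j) hxb
  have hdxj : |xa j - xb j| ≤ ‖xa - xb‖ := by simpa using norm_le_pi_norm (xa - xb) j
  have hdz : |_root_.sigmoid ((Wz.mulVec ua + Uz.mulVec xa + bz) j)
      - _root_.sigmoid ((Wz.mulVec ub + Uz.mulVec xb + bz) j)|
      ≤ (1/4) * (matNorm Wz * ‖ua - ub‖ + matNorm Uz * ‖xa - xb‖) := by
    refine le_trans (sigmoid_lip _ _) ?_
    have harg : (Wz.mulVec ua + Uz.mulVec xa + bz) j - (Wz.mulVec ub + Uz.mulVec xb + bz) j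
        = Wz.mulVec (ua - ub) j + Uz.mulVec (xa - xb) j := by
      simp [Matrix.mulVec_sub]; ring
    rw [harg]
    have h0 := abs_add_le (Wz.mulVec (ua - ub) j) (Uz.mulVec (xa - xb) j)
    have h1 := abs_mulVec_le Wz (ua - ub) j
    have h2 := abs_mulVec_le Uz (xa - xb) j
    linarith
  have hfbxb : ‖fb * xb‖ ≤ lam := by
    apply pi_norm_le _ _ hlam
    intro i
    have h1 : 0 < fb i := _root_.sigmoid_pos _
    have h2 : fb i < 1 := _root_.sigmoid_lt_one _
    have h3 : |xb i| ≤ lam := le_trans (by simpa using norm_le_pi_norm xb i) hxb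
    rw [Pi.mul_apply, abs_mul, abs_of_nonneg h1.le]
    nlinarith [abs_nonneg (xb i)]
  have hrb_le : |Real.tanh ((Wr.mulVec ub + Ur.mulVec (fb * xb) + br) j)|
      ≤ Real.tanh (catNorm (μ•Wr) (lam•Ur) br) :=
    abs_tanh_le _ _ (abs_arg_le_catNorm Wr Ur br ub (fb * xb) μ lam hμ hlam hub hfbxb j)
  have hfaxa : ‖fa * xa - fb * xb‖ ≤ _root_.sigmoid (catNorm (μ•Wf) (lam•Uf) bf) * ‖xa - xb‖
      + (1/4) * (matNorm Wf * ‖ua - ub‖ + matNorm Uf * ‖xa - xb‖) * lam := by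
    apply pi_norm_le
    · refine add_nonneg (mul_nonneg hσf0.le hdx0) (mul_nonneg (mul_nonneg (by positivity) ?_) hlam)
      exact add_nonneg (mul_nonneg hNWf hdu0) (mul_nonneg hNUf hdx0)
    intro i
    have hfai_le : fa i ≤ _root_.sigmoid (catNorm (μ•Wf) (lam•Uf) bf) :=
      (abs_sigmoid_le _ _ (abs_arg_le_catNorm Wf Uf bf ua xa μ lam hμ hlam hua hxa i)).2
    have hfai0 : 0 < fa i := _root_.sigmoid_pos _
    have hdf : |fa i - fb i| ≤ (1/4) * (matNorm Wf * ‖ua - ub‖ + matNorm Uf * ‖xa - xb‖) := by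
      refine le_trans (sigmoid_lip _ _) ?_
      have harg : (Wf.mulVec ua + Uf.mulVec xa + bf) i - (Wf.mulVec ub + Uf.mulVec xb + bf) i
          = Wf.mulVec (ua - ub) i + Uf.mulVec (xa - xb) i := by
        simp [Matrix.mulVec_sub]; ring
      rw [harg]
      have h0 := abs_add_le (Wf.mulVec (ua - ub) i) (Uf.mulVec (xa - xb) i)
      have h1 := abs_mulVec_le Wf (ua - ub) i
      have h2 := abs_mulVec_le Uf (xa - xb) i
      linarith
    have hxbi : |xb i| ≤ lam := le_trans (by simpa using norm_le_pi_norm xb i) hxb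
    have hdxi : |xa i - xb i| ≤ ‖xa - xb‖ := by simpa using norm_le_pi_norm (xa - xb) i
    have hsplit : fa i * xa i - fb i * xb i
        = fa i * (xa i - xb i) + (fa i - fb i) * xb i := by ring
    rw [Pi.sub_apply, Pi.mul_apply, Pi.mul_apply, hsplit]
    refine le_trans (abs_add_le _ _) ?_
    rw [abs_mul, abs_mul, abs_of_nonneg hfai0.le]
    have t1 : fa i * |xa i - xb i| ≤ _root_.sigmoid (catNorm (μ•Wf) (lam•Uf) bf) * ‖xa - xb‖ :=
      mul_le_mul hfai_le hdxi (abs_nonneg _) hσf0.le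
    have t2 : |fa i - fb i| * |xb i|
        ≤ (1/4) * (matNorm Wf * ‖ua - ub‖ + matNorm Uf * ‖xa - xb‖) * lam :=
      mul_le_mul hdf hxbi (abs_nonneg _) ((abs_nonneg _).trans hdf)
    linarith
  have hdr : |Real.tanh ((Wr.mulVec ua + Ur.mulVec (fa * xa) + br) j)
      - Real.tanh ((Wr.mulVec ub + Ur.mulVec (fb * xb) + br) j)|
      ≤ (matNorm Ur * ((1/4)*lam*matNorm Uf + _root_.sigmoid (catNorm (μ•Wf) (lam•Uf) bf))) * ‖xa - xb‖
        + (matNorm Wr + (1/4)*lam*matNorm Ur*matNorm Wf) * ‖ua - ub‖ := by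
    refine le_trans (tanh_lip _ _) ?_
    have harg : (Wr.mulVec ua + Ur.mulVec (fa * xa) + br) j
        - (Wr.mulVec ub + Ur.mulVec (fb * xb) + br) j
        = Wr.mulVec (ua - ub) j + Ur.mulVec (fa * xa - fb * xb) j := by
      simp [Matrix.mulVec_sub]; ring
    rw [harg]
    have h0 := abs_add_le (Wr.mulVec (ua - ub) j) (Ur.mulVec (fa * xa - fb * xb) j)
    have h1 := abs_mulVec_le Wr (ua - ub) j
    have h2 := abs_mulVec_le Ur (fa * xa - fb * xb) j
    have h3 : matNorm Ur * ‖fa * xa - fb * xb‖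
        ≤ matNorm Ur * (_root_.sigmoid (catNorm (μ•Wf) (lam•Uf) bf) * ‖xa - xb‖
          + (1/4) * (matNorm Wf * ‖ua - ub‖ + matNorm Uf * ‖xa - xb‖) * lam) :=
      mul_le_mul_of_nonneg_left hfaxa hNUr
    nlinarith [h0, h1, h2, h3]
  have hFr0 : 0 ≤ matNorm Wr + (1/4)*lam*matNorm Ur*matNorm Wf := by positivity
  exact inc_core hE0 hE hFr0 hNWz hNUz hlam hφr0 hdx0 hdu0 hza0 hza1 hza_le hdz hxbj hrb_le
    hdr hdxj


/-- linear functions with positive slope are class K∞ -/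
lemma isKInf_linear (c : ℝ) (hc : 0 < c) : IsKInf (fun s => c * s) := by
  refine ⟨(continuous_const.mul continuous_id).continuousOn, ?_, mul_zero c, ?_⟩
  · intro x _ y _ hxy
    exact mul_lt_mul_of_pos_left hxy hc
  · intro M
    refine ⟨(|M| + 1)/c, by positivity, ?_⟩
    show M < c * ((|M| + 1)/c)
    rw [mul_div_cancel₀ _ hc.ne']
    calc M ≤ |M| := le_abs_self M
      _ < |M| + 1 := by linarith

lemma isKL_geom (A r : ℝ) (hA : 0 < A) (hr0 : 0 < r) (hr1 : r < 1) :
    IsKL (fun s k => A * r ^ k * s) := by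
  refine ⟨fun k => isKInf_linear (A * r ^ k) (by positivity), ?_, ?_⟩
  · intro s hs k l hkl
    have h := pow_le_pow_of_le_one hr0.le hr1.le hkl
    have := mul_le_mul_of_nonneg_left h hA.le
    exact mul_le_mul_of_nonneg_right this hs
  · intro s _
    have h := tendsto_pow_atTop_nhds_zero_of_lt_one hr0.le hr1
    have := (h.const_mul A).mul_const s
    simpa using this

lemma exists_rate (f : ℕ → ℝ) (M : ℕ) (h : ∀ i < M, f i < 1) :
    ∃ r : ℝ, 1/2 ≤ r ∧ r < 1 ∧ ∀ i < M, f i < r := by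
  induction M with
  | zero => exact ⟨1/2, le_refl _, by norm_num, fun i hi => absurd hi (by omega)⟩
  | succ M ih =>
    obtain ⟨r, hr1, hr2, hr3⟩ := ih (fun i hi => h i (by omega))
    have hM := h M (by omega)
    refine ⟨max r ((1 + f M)/2), le_trans hr1 (le_max_left _ _),
      max_lt hr2 (by linarith), ?_⟩
    intro i hi
    rcases Nat.lt_succ_iff_lt_or_eq.1 hi with hi | hi
    · exact lt_of_lt_of_le (hr3 i hi) (le_max_left _ _)
    · subst hi
      exact lt_of_lt_of_le (by linarith : f i < (1 + f i)/2) (le_max_right _ _)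

lemma exists_ubound (f : ℕ → ℝ) (M : ℕ) : ∃ C : ℝ, 1 ≤ C ∧ ∀ i < M, f i ≤ C := by
  induction M with
  | zero => exact ⟨1, le_refl _, fun i hi => absurd hi (by omega)⟩
  | succ M ih =>
    obtain ⟨C, hC1, hC2⟩ := ih
    refine ⟨max C (f M), le_trans hC1 (le_max_left _ _), fun i hi => ?_⟩
    rcases Nat.lt_succ_iff_lt_or_eq.1 hi with hi | hi
    · exact le_trans (hC2 i hi) (le_max_left _ _)
    · subst hi; exact le_max_right _ _


lemma coef_props {nu nx : ℕ} (Wz Wf Wr : Matrix (Fin nx) (Fin nu) ℝ)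
    (Uz Uf Ur : Matrix (Fin nx) (Fin nx) ℝ) (bz bf br : Fin nx → ℝ) (μ lam : ℝ)
    (hlam : 1 ≤ lam)
    (hc : matNorm Ur * ((1 / 4) * lam * matNorm Uf + _root_.sigmoid (catNorm (μ • Wf) (lam • Uf) bf)) <
      1 - (1 / 4) * ((lam + Real.tanh (catNorm (μ • Wr) (lam • Ur) br)) /
        (1 - _root_.sigmoid (catNorm (μ • Wz) (lam • Uz) bz))) * matNorm Uz) :
    aCoef Wz Wf Wr Uz Uf Ur bz bf br μ lam < 1 ∧
    0 ≤ aCoef Wz Wf Wr Uz Uf Ur bz bf br μ lam ∧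
    0 ≤ bCoef Wz Wf Wr Uz Uf Ur bz bf br μ lam ∧
    matNorm Ur * ((1/4)*lam*matNorm Uf + _root_.sigmoid (catNorm (μ•Wf) (lam•Uf) bf)) ≤ 1 := by
  unfold aCoef bCoef
  set σz := _root_.sigmoid (catNorm (μ•Wz) (lam•Uz) bz) with hσzd
  set σf := _root_.sigmoid (catNorm (μ•Wf) (lam•Uf) bf) with hσfd
  set φr := Real.tanh (catNorm (μ•Wr) (lam•Ur) br) with hφrd
  have hσz0 : 0 < σz := _root_.sigmoid_pos _
  have hσz1 : σz < 1 := _root_.sigmoid_lt_one _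
  have hσf0 : 0 < σf := _root_.sigmoid_pos _
  have hφr0 : 0 ≤ φr := tanh_nonneg (catNorm_nonneg _ _ _)
  have hNUz := matNorm_nonneg Uz
  have hNUf := matNorm_nonneg Uf
  have hNUr := matNorm_nonneg Ur
  have hNWz := matNorm_nonneg Wz
  have hNWf := matNorm_nonneg Wf
  have hNWr := matNorm_nonneg Wr
  have hs : 0 < 1 - σz := by linarith
  have hqnn : 0 ≤ (1/4) * ((lam + φr)/(1-σz)) * matNorm Uz :=
    mul_nonneg (mul_nonneg (by norm_num) (div_nonneg (by linarith) hs.le)) hNUz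
  have hE1 : matNorm Ur * ((1/4)*lam*matNorm Uf + σf) ≤ 1 := by
    have := hc; linarith
  have hE0 : 0 ≤ matNorm Ur * ((1/4)*lam*matNorm Uf + σf) :=
    mul_nonneg hNUr (by nlinarith)
  have key : (1-σz) * ((1/4) * ((lam + φr)/(1-σz)) * matNorm Uz)
      = (1/4)*(lam+φr)*matNorm Uz := by
    field_simp
  have h2 := mul_lt_mul_of_pos_left hc hs
  refine ⟨?_, ?_, ?_, hE1⟩
  · nlinarith [h2, key]
  · have h3 : 0 ≤ (1-σz) * (matNorm Ur * ((1/4)*lam*matNorm Uf + σf)) :=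
      mul_nonneg hs.le hE0
    have h4 : 0 ≤ (1/4)*(lam + φr) * matNorm Uz :=
      mul_nonneg (by linarith) hNUz
    linarith
  · have h4 : 0 ≤ (1/4)*(lam + φr) * matNorm Wz :=
      mul_nonneg (by linarith) hNWz
    have h5 : 0 ≤ (1/4)*lam*matNorm Ur*matNorm Wf := by positivity
    linarith

/-- solution bound for the cascaded linear recursion -/
lemma rec_bound (a b r S du A' B' : ℝ)
    (ha0 : 0 ≤ a) (har : a < r) (hr0 : 0 < r) (hr1 : r < 1)
    (hb : 0 ≤ b) (hS0 : 0 ≤ S) (hdu0 : 0 ≤ du) (hA' : 0 ≤ A') (hB' : 0 ≤ B')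
    (d g : ℕ → ℝ) (hd0 : d 0 ≤ S)
    (hg : ∀ k, g (k+1) ≤ A' * r ^ (k+1) * S + B' * du)
    (hrec : ∀ k, d (k+1) ≤ a * d k + b * g (k+1)) :
    ∀ k, d k ≤ max 1 (b*A'*r/(r-a)) * r ^ k * S + (b*B'/(1-a)) * du := by
  set A := max 1 (b*A'*r/(r-a)) with hAd
  set B := b*B'/(1-a) with hBd
  have hra : 0 < r - a := by linarith
  have h1a : 0 < 1 - a := by linarith
  have hA1 : (1:ℝ) ≤ A := le_max_left _ _
  have hB0 : 0 ≤ B := div_nonneg (mul_nonneg hb hB') h1a.le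
  have hAineq : b * A' * r ≤ A * (r - a) := by
    have h := le_max_right 1 (b*A'*r/(r-a))
    calc b*A'*r = (b*A'*r/(r-a)) * (r-a) := (div_mul_cancel₀ _ hra.ne').symm
      _ ≤ A * (r - a) := mul_le_mul_of_nonneg_right h hra.le
  have hBineq : a * B + b * B' = B := by
    rw [hBd]; field_simp; ring
  intro k
  induction k with
  | zero =>
    have h1 : S ≤ A * S := le_mul_of_one_le_left hS0 hA1
    have h2 : 0 ≤ B * du := mul_nonneg hB0 hdu0
    have h3 : A * r ^ 0 * S + B * du = A * S + B * du := by simp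
    rw [h3]
    linarith
  | succ k ih =>
    have h2 := hrec k
    have h3 := hg k
    have h4 : a * d k ≤ a * (A*r^k*S + B*du) := mul_le_mul_of_nonneg_left ih ha0
    have h5 : b * g (k+1) ≤ b * (A'*r^(k+1)*S + B'*du) := mul_le_mul_of_nonneg_left h3 hb
    have hpow : r^(k+1) = r * r^k := by rw [pow_succ]; ring
    have hfac : 0 ≤ (A*(r-a) - b*A'*r) * (r^k * S) :=
      mul_nonneg (by linarith) (mul_nonneg (pow_nonneg hr0.le k) hS0)
    have heq : a*(B*du) + b*(B'*du) = B*du := by linear_combination du * hBineq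
    rw [hpow] at h5 ⊢
    nlinarith [h2, h4, h5, hfac, heq]

/-- **Proposition 3 (δISS of deep GRUs).**
With `σ̌_z^i = σ(‖[λ̌^{i-1}W_z^i λ̌^iU_z^i b_z^i]‖_∞)`,
`σ̌_f^i = σ(‖[λ̌^{i-1}W_f^i λ̌^iU_f^i b_f^i]‖_∞)`,
`φ̌_r^i = tanh(‖[λ̌^{i-1}W_r^i λ̌^iU_r^i b_r^i]‖_∞)`, if for every layer
`‖U_r^i‖_∞ ((1/4) λ̌^i ‖U_f^i‖_∞ + σ̌_f^i) < 1 - (1/4) ((λ̌^i + φ̌_r^i)/(1 - σ̌_z^i)) ‖U_z^i‖_∞`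
then the deep GRU is Incrementally Input-to-State Stable. -/
theorem deep_gru_deltaISS {nu M : ℕ} {n : ℕ → ℕ}
    (Wz Wf Wr : ∀ i : ℕ, Matrix (Fin (n i)) (Fin (inDim nu n i)) ℝ)
    (Uz Uf Ur : ∀ i : ℕ, Matrix (Fin (n i)) (Fin (n i)) ℝ)
    (bz bf br : ∀ i : ℕ, Fin (n i) → ℝ)
    (lam : ℕ → ℝ) (hlam : ∀ i < M, 1 ≤ lam i)
    (hcond : ∀ i < M,
      matNorm (Ur i) * ((1 / 4) * lam i * matNorm (Uf i) +
          _root_.sigmoid (catNorm (lamIn lam i • Wf i) (lam i • Uf i) (bf i))) <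
        1 - (1 / 4) *
          ((lam i + Real.tanh (catNorm (lamIn lam i • Wr i) (lam i • Ur i) (br i))) /
            (1 - _root_.sigmoid (catNorm (lamIn lam i • Wz i) (lam i • Uz i) (bz i)))) *
          matNorm (Uz i)) :
    ∃ β : ℝ → ℕ → ℝ, ∃ γu : ℝ → ℝ, IsKL β ∧ IsKInf γu ∧
      ∀ xbara xbarb : ∀ i : ℕ, Fin (n i) → ℝ,
        (∀ i < M, ‖xbara i‖ ≤ lam i) → (∀ i < M, ‖xbarb i‖ ≤ lam i) →
        ∀ ua ub : ℕ → Fin nu → ℝ, (∀ t, ‖ua t‖ ≤ 1) → (∀ t, ‖ub t‖ ≤ 1) →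
          ∀ xa xb : ℕ → ∀ i : ℕ, Fin (n i) → ℝ, xa 0 = xbara → xb 0 = xbarb →
            (∀ k, 0 < M → xa (k + 1) 0 =
              gruStep (Wz 0) (Wf 0) (Wr 0) (Uz 0) (Uf 0) (Ur 0) (bz 0) (bf 0) (br 0)
                (ua k) (xa k 0)) →
            (∀ k, ∀ i : ℕ, i + 1 < M → xa (k + 1) (i + 1) =
              gruStep (Wz (i + 1)) (Wf (i + 1)) (Wr (i + 1)) (Uz (i + 1)) (Uf (i + 1))
                (Ur (i + 1)) (bz (i + 1)) (bf (i + 1)) (br (i + 1))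
                (xa (k + 1) i) (xa k (i + 1))) →
            (∀ k, 0 < M → xb (k + 1) 0 =
              gruStep (Wz 0) (Wf 0) (Wr 0) (Uz 0) (Uf 0) (Ur 0) (bz 0) (bf 0) (br 0)
                (ub k) (xb k 0)) →
            (∀ k, ∀ i : ℕ, i + 1 < M → xb (k + 1) (i + 1) =
              gruStep (Wz (i + 1)) (Wf (i + 1)) (Wr (i + 1)) (Uz (i + 1)) (Uf (i + 1))
                (Ur (i + 1)) (bz (i + 1)) (bf (i + 1)) (br (i + 1))
                (xb (k + 1) i) (xb k (i + 1))) →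
              ∀ k : ℕ, (⨆ i : Fin M, ‖xa k (i : ℕ) - xb k (i : ℕ)‖) ≤
                β (⨆ i : Fin M, ‖xbara (i : ℕ) - xbarb (i : ℕ)‖) k +
                  γu (⨆ t, ‖ua t - ub t‖) := by
  classical
  have hlamIn : ∀ i < M, (1:ℝ) ≤ lamIn lam i := by
    intro i hi
    cases i with
    | zero => norm_num [lamIn]
    | succ j => simpa [lamIn] using hlam j (by omega)
  have hco : ∀ i, i < M →
      (aCoef (Wz i) (Wf i) (Wr i) (Uz i) (Uf i) (Ur i) (bz i) (bf i) (br i) (lamIn lam i) (lam i) < 1 ∧ 0 ≤ aCoef (Wz i) (Wf i) (Wr i) (Uz i) (Uf i) (Ur i) (bz i) (bf i) (br i) (lamIn lam i) (lam i) ∧ 0 ≤ bCoef (Wz i) (Wf i) (Wr i) (Uz i) (Uf i) (Ur i) (bz i) (bf i) (br i) (lamIn lam i) (lam i) ∧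
        matNorm (Ur i) * ((1/4)*lam i*matNorm (Uf i) +
          _root_.sigmoid (catNorm (lamIn lam i • Wf i) (lam i • Uf i) (bf i))) ≤ 1) :=
    fun i hi => coef_props (Wz i) (Wf i) (Wr i) (Uz i) (Uf i) (Ur i) (bz i) (bf i) (br i)
      (lamIn lam i) (lam i) (hlam i hi) (hcond i hi)
  obtain ⟨r, hr_half, hr1, hr_gt⟩ := exists_rate (fun i => aCoef (Wz i) (Wf i) (Wr i) (Uz i) (Uf i) (Ur i) (bz i) (bf i) (br i) (lamIn lam i) (lam i)) M
    (fun i hi => (hco i hi).1)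
  have hr0 : (0:ℝ) < r := by linarith
  have key_step : ∀ i, ∀ hi : i < M, ∀ (ua' ub' : Fin (inDim nu n i) → ℝ)
      (xa' xb' : Fin (n i) → ℝ),
      ‖ua'‖ ≤ lamIn lam i → ‖ub'‖ ≤ lamIn lam i → ‖xa'‖ ≤ lam i → ‖xb'‖ ≤ lam i →
      ‖gruStep (Wz i) (Wf i) (Wr i) (Uz i) (Uf i) (Ur i) (bz i) (bf i) (br i) ua' xa' - gruStep (Wz i) (Wf i) (Wr i) (Uz i) (Uf i) (Ur i) (bz i) (bf i) (br i) ub' xb'‖ ≤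
        aCoef (Wz i) (Wf i) (Wr i) (Uz i) (Uf i) (Ur i) (bz i) (bf i) (br i) (lamIn lam i) (lam i) * ‖xa' - xb'‖ + bCoef (Wz i) (Wf i) (Wr i) (Uz i) (Uf i) (Ur i) (bz i) (bf i) (br i) (lamIn lam i) (lam i) * ‖ua' - ub'‖ := by
    intro i hi ua' ub' xa' xb' h1 h2 h3 h4
    exact gru_step_inc _ _ _ _ _ _ _ _ _ _ _ (by linarith [hlamIn i hi])
      (by linarith [hlam i hi]) _ _ _ _ h1 h2 h3 h4 (hco i hi).2.2.2
  have stateBound : ∀ (u : ℕ → Fin nu → ℝ) (x : ℕ → ∀ j : ℕ, Fin (n j) → ℝ),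
      (∀ j, j < M → ‖x 0 j‖ ≤ lam j) →
      (∀ k, 0 < M → x (k+1) 0 = gruStep (Wz 0) (Wf 0) (Wr 0) (Uz 0) (Uf 0) (Ur 0) (bz 0) (bf 0) (br 0) (u k) (x k 0)) →
      (∀ k, ∀ j : ℕ, j + 1 < M → x (k+1) (j+1) = gruStep (Wz (j+1)) (Wf (j+1)) (Wr (j+1)) (Uz (j+1)) (Uf (j+1)) (Ur (j+1)) (bz (j+1)) (bf (j+1)) (br (j+1)) (x (k+1) j) (x k (j+1))) →
      ∀ k, ∀ j, j < M → ‖x k j‖ ≤ lam j := by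
    intro u x h0 hS0 hSS k
    induction k with
    | zero => exact h0
    | succ k ih =>
      intro j hj
      cases j with
      | zero =>
        rw [hS0 k hj]
        exact gru_invariant _ _ _ _ _ _ _ _ _ _ _ _ (hlam 0 hj) (ih 0 hj)
      | succ j =>
        rw [hSS k j hj]
        exact gru_invariant _ _ _ _ _ _ _ _ _ _ _ _ (hlam (j+1) hj) (ih (j+1) hj)
  have layer : ∀ i, i < M → ∃ A B : ℝ, 1 ≤ A ∧ 0 ≤ B ∧
      ∀ (xbara xbarb : ∀ j : ℕ, Fin (n j) → ℝ),
        (∀ j, j < M → ‖xbara j‖ ≤ lam j) → (∀ j, j < M → ‖xbarb j‖ ≤ lam j) →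
        ∀ (ua ub : ℕ → Fin nu → ℝ), (∀ t, ‖ua t‖ ≤ 1) → (∀ t, ‖ub t‖ ≤ 1) →
        ∀ (xa xb : ℕ → ∀ j : ℕ, Fin (n j) → ℝ), xa 0 = xbara → xb 0 = xbarb →
        (∀ k, 0 < M → xa (k+1) 0 = gruStep (Wz 0) (Wf 0) (Wr 0) (Uz 0) (Uf 0) (Ur 0) (bz 0) (bf 0) (br 0) (ua k) (xa k 0)) →
        (∀ k, ∀ j : ℕ, j + 1 < M → xa (k+1) (j+1) = gruStep (Wz (j+1)) (Wf (j+1)) (Wr (j+1)) (Uz (j+1)) (Uf (j+1)) (Ur (j+1)) (bz (j+1)) (bf (j+1)) (br (j+1)) (xa (k+1) j) (xa k (j+1))) →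
        (∀ k, 0 < M → xb (k+1) 0 = gruStep (Wz 0) (Wf 0) (Wr 0) (Uz 0) (Uf 0) (Ur 0) (bz 0) (bf 0) (br 0) (ub k) (xb k 0)) →
        (∀ k, ∀ j : ℕ, j + 1 < M → xb (k+1) (j+1) = gruStep (Wz (j+1)) (Wf (j+1)) (Wr (j+1)) (Uz (j+1)) (Uf (j+1)) (Ur (j+1)) (bz (j+1)) (bf (j+1)) (br (j+1)) (xb (k+1) j) (xb k (j+1))) →
        ∀ k, ‖xa k i - xb k i‖ ≤ A * r ^ k * (⨆ j : Fin M, ‖xbara ↑j - xbarb ↑j‖)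
          + B * (⨆ t, ‖ua t - ub t‖) := by
    intro i
    induction i with
    | zero =>
      intro hM
      obtain ⟨ha1, ha0, hb0, -⟩ := hco 0 hM
      refine ⟨max 1 (bCoef (Wz 0) (Wf 0) (Wr 0) (Uz 0) (Uf 0) (Ur 0) (bz 0) (bf 0) (br 0) (lamIn lam 0) (lam 0)*1*r/(r - aCoef (Wz 0) (Wf 0) (Wr 0) (Uz 0) (Uf 0) (Ur 0) (bz 0) (bf 0) (br 0) (lamIn lam 0) (lam 0))), bCoef (Wz 0) (Wf 0) (Wr 0) (Uz 0) (Uf 0) (Ur 0) (bz 0) (bf 0) (br 0) (lamIn lam 0) (lam 0)*1/(1 - aCoef (Wz 0) (Wf 0) (Wr 0) (Uz 0) (Uf 0) (Ur 0) (bz 0) (bf 0) (br 0) (lamIn lam 0) (lam 0)),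
        le_max_left _ _, div_nonneg (by linarith) (by linarith [hr_gt 0 hM]), ?_⟩
      intro xbara xbarb hxba hxbb ua ub hua hub xa xb hxa0 hxb0 hsa0 hsaS hsb0 hsbS
      have hS0 : (0:ℝ) ≤ ⨆ j : Fin M, ‖xbara ↑j - xbarb ↑j‖ :=
        Real.iSup_nonneg fun j => norm_nonneg _
      have hdu0 : (0:ℝ) ≤ ⨆ t, ‖ua t - ub t‖ :=
        Real.iSup_nonneg fun t => norm_nonneg _
      have hdu_le : ∀ t, ‖ua t - ub t‖ ≤ ⨆ t, ‖ua t - ub t‖ := by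
        intro t
        refine le_ciSup (f := fun t => ‖ua t - ub t‖) ⟨2, ?_⟩ t
        rintro y ⟨t', rfl⟩
        have h1 := hua t'
        have h2 := hub t'
        have h3 := norm_sub_le (ua t') (ub t')
        linarith
      have hxaB := stateBound ua xa (fun j hj => by rw [hxa0]; exact hxba j hj) hsa0 hsaS
      have hxbB := stateBound ub xb (fun j hj => by rw [hxb0]; exact hxbb j hj) hsb0 hsbS
      apply rec_bound (aCoef (Wz 0) (Wf 0) (Wr 0) (Uz 0) (Uf 0) (Ur 0) (bz 0) (bf 0) (br 0) (lamIn lam 0) (lam 0)) (bCoef (Wz 0) (Wf 0) (Wr 0) (Uz 0) (Uf 0) (Ur 0) (bz 0) (bf 0) (br 0) (lamIn lam 0) (lam 0)) r _ _ 1 1 ha0 (hr_gt 0 hM) hr0 hr1 hb0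
        hS0 hdu0 zero_le_one zero_le_one
        (fun k => ‖xa k 0 - xb k 0‖)
        (fun k => Nat.casesOn k 0 (fun k' => ‖ua k' - ub k'‖))
      · rw [hxa0, hxb0]
        exact le_ciSup (f := fun j : Fin M => ‖xbara ↑j - xbarb ↑j‖)
          (Set.Finite.bddAbove (Set.finite_range _)) (⟨0, hM⟩ : Fin M)
      · intro k
        have h1 : (0:ℝ) ≤ 1 * r^(k+1) * (⨆ j : Fin M, ‖xbara ↑j - xbarb ↑j‖) := by
          have := pow_nonneg hr0.le (k+1)
          nlinarith
        have h2 := hdu_le k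
        show ‖ua k - ub k‖ ≤ _
        nlinarith [h2]
      · intro k
        rw [hsa0 k hM, hsb0 k hM]
        exact key_step 0 hM (ua k) (ub k) (xa k 0) (xb k 0)
          (by exact hua k) (by exact hub k)
          (hxaB k 0 hM) (hxbB k 0 hM)
    | succ i ih =>
      intro hi
      have hiM : i < M := by omega
      obtain ⟨A', B', hA'1, hB'0, ihb⟩ := ih hiM
      obtain ⟨ha1, ha0, hb0, -⟩ := hco (i+1) hi
      refine ⟨max 1 (bCoef (Wz (i+1)) (Wf (i+1)) (Wr (i+1)) (Uz (i+1)) (Uf (i+1)) (Ur (i+1)) (bz (i+1)) (bf (i+1)) (br (i+1)) (lamIn lam (i+1)) (lam (i+1))*A'*r/(r - aCoef (Wz (i+1)) (Wf (i+1)) (Wr (i+1)) (Uz (i+1)) (Uf (i+1)) (Ur (i+1)) (bz (i+1)) (bf (i+1)) (br (i+1)) (lamIn lam (i+1)) (lam (i+1)))),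
        bCoef (Wz (i+1)) (Wf (i+1)) (Wr (i+1)) (Uz (i+1)) (Uf (i+1)) (Ur (i+1)) (bz (i+1)) (bf (i+1)) (br (i+1)) (lamIn lam (i+1)) (lam (i+1))*B'/(1 - aCoef (Wz (i+1)) (Wf (i+1)) (Wr (i+1)) (Uz (i+1)) (Uf (i+1)) (Ur (i+1)) (bz (i+1)) (bf (i+1)) (br (i+1)) (lamIn lam (i+1)) (lam (i+1))),
        le_max_left _ _, div_nonneg (mul_nonneg hb0 hB'0) (by linarith [hr_gt (i+1) hi]), ?_⟩
      intro xbara xbarb hxba hxbb ua ub hua hub xa xb hxa0 hxb0 hsa0 hsaS hsb0 hsbS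
      have hS0 : (0:ℝ) ≤ ⨆ j : Fin M, ‖xbara ↑j - xbarb ↑j‖ :=
        Real.iSup_nonneg fun j => norm_nonneg _
      have hdu0 : (0:ℝ) ≤ ⨆ t, ‖ua t - ub t‖ :=
        Real.iSup_nonneg fun t => norm_nonneg _
      have hxaB := stateBound ua xa (fun j hj => by rw [hxa0]; exact hxba j hj) hsa0 hsaS
      have hxbB := stateBound ub xb (fun j hj => by rw [hxb0]; exact hxbb j hj) hsb0 hsbS
      apply rec_bound (aCoef (Wz (i+1)) (Wf (i+1)) (Wr (i+1)) (Uz (i+1)) (Uf (i+1)) (Ur (i+1)) (bz (i+1)) (bf (i+1)) (br (i+1)) (lamIn lam (i+1)) (lam (i+1))) (bCoef (Wz (i+1)) (Wf (i+1)) (Wr (i+1)) (Uz (i+1)) (Uf (i+1)) (Ur (i+1)) (bz (i+1)) (bf (i+1)) (br (i+1)) (lamIn lam (i+1)) (lam (i+1))) r _ _ A' B' ha0 (hr_gt (i+1) hi)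
        hr0 hr1 hb0 hS0 hdu0 (by linarith) hB'0
        (fun k => ‖xa k (i+1) - xb k (i+1)‖)
        (fun k => ‖xa k i - xb k i‖)
      · rw [hxa0, hxb0]
        exact le_ciSup (f := fun j : Fin M => ‖xbara ↑j - xbarb ↑j‖)
          (Set.Finite.bddAbove (Set.finite_range _)) (⟨i+1, hi⟩ : Fin M)
      · intro k
        exact ihb xbara xbarb hxba hxbb ua ub hua hub xa xb hxa0 hxb0 hsa0 hsaS hsb0 hsbS (k+1)
      · intro k
        rw [hsaS k i hi, hsbS k i hi]
        exact key_step (i+1) hi (xa (k+1) i) (xb (k+1) i) (xa k (i+1)) (xb k (i+1))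
          (by exact hxaB (k+1) i hiM) (by exact hxbB (k+1) i hiM)
          (hxaB k (i+1) hi) (hxbB k (i+1) hi)
  choose! A B hA1 hB0 hbound using layer
  obtain ⟨Am, hAm1, hAmle⟩ := exists_ubound A M
  obtain ⟨Bm, hBm1, hBmle⟩ := exists_ubound B M
  refine ⟨fun s k => Am * r ^ k * s, fun s => (Bm + 1) * s,
    isKL_geom Am r (by linarith) hr0 hr1, isKInf_linear (Bm + 1) (by linarith), ?_⟩
  intro xbara xbarb hxba hxbb ua ub hua hub xa xb hxa0 hxb0 hsa0 hsaS hsb0 hsbS k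
  have hS0 : (0:ℝ) ≤ ⨆ j : Fin M, ‖xbara ↑j - xbarb ↑j‖ :=
    Real.iSup_nonneg fun j => norm_nonneg _
  have hdu0 : (0:ℝ) ≤ ⨆ t, ‖ua t - ub t‖ :=
    Real.iSup_nonneg fun t => norm_nonneg _
  show (⨆ j : Fin M, ‖xa k ↑j - xb k ↑j‖) ≤
    Am * r ^ k * (⨆ j : Fin M, ‖xbara ↑j - xbarb ↑j‖) + (Bm + 1) * (⨆ t, ‖ua t - ub t‖)
  apply Real.iSup_le
  · intro j
    have hb := hbound (↑j) j.isLt xbara xbarb hxba hxbb ua ub hua hub xa xb hxa0 hxb0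
      hsa0 hsaS hsb0 hsbS k
    have h1 : A ↑j * r ^ k * (⨆ j : Fin M, ‖xbara ↑j - xbarb ↑j‖)
        ≤ Am * r ^ k * (⨆ j : Fin M, ‖xbara ↑j - xbarb ↑j‖) :=
      mul_le_mul_of_nonneg_right
        (mul_le_mul_of_nonneg_right (hAmle (↑j) j.isLt) (pow_nonneg hr0.le k)) hS0
    have h2 : B ↑j * (⨆ t, ‖ua t - ub t‖) ≤ (Bm + 1) * (⨆ t, ‖ua t - ub t‖) :=
      mul_le_mul_of_nonneg_right (by linarith [hBmle (↑j) j.isLt]) hdu0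
    linarith
  · have h1 : 0 ≤ Am * r ^ k * (⨆ j : Fin M, ‖xbara ↑j - xbarb ↑j‖) :=
      mul_nonneg (mul_nonneg (by linarith) (pow_nonneg hr0.le k)) hS0
    have h2 : 0 ≤ (Bm + 1) * (⨆ t, ‖ua t - ub t‖) :=
      mul_nonneg (by linarith) hdu0
    linarith
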